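/- Let A be a bounded linear operator on ℋ = ℝ × H with block data (c, u, v, B) that preserves the Lorentz form. If A is surjective, then in addition B∘B* = id_H + u⊗u, ‖v‖² = c² − 1, and B v = c·u. -/
import Mathlib


open scoped RealInnerProductSpace

noncomputable section

variable {H : Type*} [NormedAddCommGroup H] [InnerProductSpace ℝ H]

/-- The Lorentz form on `ℝ × H`: `⟨(s,x),(t,y)⟩_L = ⟪x,y⟫ - s·t`. -/
def lorentzInner (z w : ℝ × H) : ℝ := ⟪z.2, w.2⟫ - z.1 * w.1

/-- The rank-one operator `a ⊗ b : x ↦ ⟪b,x⟫ • a`. -/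
def rankOne (a b : H) : H →L[ℝ] H := (innerSL ℝ b).smulRight a

/-- If a bounded operator `A` on `ℝ × H` with block data `(c,u,v,B)` preserves the Lorentz
form and is surjective, then in addition `B ∘ B* = id + u ⊗ u`, `‖v‖² = c² - 1` and
`B v = c • u`. -/
theorem preserves_lorentz_surjective_block_relations [CompleteSpace H]
    (A : (ℝ × H) →L[ℝ] (ℝ × H)) (c : ℝ) (u v : H) (B : H →L[ℝ] H)
    (hblock : ∀ (s : ℝ) (x : H), A (s, x) = (c * s + ⟪v, x⟫, s • u + B x))
    (hL : ∀ z w : ℝ × H, lorentzInner (A z) (A w) = lorentzInner z w)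
    (hsurj : Function.Surjective A) :
    B ∘L ContinuousLinearMap.adjoint B = ContinuousLinearMap.id ℝ H + rankOne u u ∧
      ‖v‖ ^ 2 = c ^ 2 - 1 ∧
      B v = c • u := by
  set Bs := ContinuousLinearMap.adjoint B with hBs
  -- basic relations from Lorentz preservation
  have h1 : ⟪u, u⟫ - c * c = -1 := by
    have := hL (1, (0:H)) (1, (0:H))
    simp only [hblock, lorentzInner] at this
    simpa using this
  have h2 : ∀ y : H, ⟪u, B y⟫ = c * ⟪v, y⟫ := by
    intro y
    have := hL (1, (0:H)) (0, y)
    simp only [hblock, lorentzInner] at this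
    simp only [inner_zero_right, add_zero, mul_zero, mul_one, zero_add, zero_smul,
      one_smul, smul_zero, map_zero, inner_zero_left] at this
    linarith
  have h3 : ∀ x y : H, ⟪B x, B y⟫ = ⟪x, y⟫ + ⟪v, x⟫ * ⟪v, y⟫ := by
    intro x y
    have := hL (0, x) (0, y)
    simp only [hblock, lorentzInner] at this
    simp only [mul_zero, zero_add, zero_smul, zero_add, sub_zero] at this
    linarith
  -- B* u = c • v
  have hBsu : Bs u = c • v := by
    apply ext_inner_right ℝ
    intro y
    rw [hBs, ContinuousLinearMap.adjoint_inner_left, h2 y, real_inner_smul_left]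
  -- B* B x = x + ⟪v,x⟫ • v
  have hBsB : ∀ x : H, Bs (B x) = x + ⟪v, x⟫ • v := by
    intro x
    apply ext_inner_right ℝ
    intro y
    rw [hBs, ContinuousLinearMap.adjoint_inner_left, h3 x y, inner_add_left,
      real_inner_smul_left]
  -- the explicit left inverse
  set A' : ℝ × H → ℝ × H := fun w => (c * w.1 - ⟪u, w.2⟫, (-w.1) • v + Bs w.2) with hA'
  have hleft : ∀ z : ℝ × H, A' (A z) = z := by
    rintro ⟨s, x⟩
    simp only [hA', hblock]
    refine Prod.ext ?_ ?_
    · show c * (c * s + ⟪v, x⟫) - ⟪u, s • u + B x⟫ = s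
      rw [inner_add_right, real_inner_smul_right, h2]
      linear_combination (-s) * h1
    · show (-(c * s + ⟪v, x⟫)) • v + Bs (s • u + B x) = x
      rw [map_add, map_smul, hBsu, hBsB]
      simp only [smul_smul]
      module
  have hright : ∀ w : ℝ × H, A (A' w) = w := by
    intro w
    obtain ⟨z, rfl⟩ := hsurj w
    rw [hleft z]
  -- evaluate right inverse at (1,0)
  have e1 : A (A' (1, (0:H))) = (1, (0:H)) := hright _
  simp only [hA', mul_one, inner_zero_right, sub_zero, map_zero, add_zero, neg_smul,
    one_smul] at e1
  rw [hblock] at e1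
  have e1a : c * c + ⟪v, -v⟫ = 1 := congrArg Prod.fst e1
  have e1b : c • u + B (-v) = 0 := congrArg Prod.snd e1
  have hBv : B v = c • u := by
    rw [map_neg] at e1b
    linear_combination (norm := module) -e1b
  have hnv : ‖v‖ ^ 2 = c ^ 2 - 1 := by
    rw [inner_neg_right, real_inner_self_eq_norm_sq] at e1a
    nlinarith
  refine ⟨?_, hnv, hBv⟩
  ext y
  have e2 : A (A' (0, y)) = (0, y) := hright _
  simp only [hA', mul_zero, zero_sub, neg_zero, zero_smul, zero_add] at e2
  rw [hblock] at e2
  have e2b : (-⟪u, y⟫) • u + B (Bs y) = y := congrArg Prod.snd e2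
  simp only [ContinuousLinearMap.comp_apply, ContinuousLinearMap.add_apply,
    ContinuousLinearMap.id_apply, rankOne, ContinuousLinearMap.smulRight_apply,
    innerSL_apply_apply]
  linear_combination (norm := module) e2b
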